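/- In the setting of the dual of the overlapping group ℓ₁ proximal subproblem: if ŷ* is a dual maximizer of φ_d(ŷ) = −(α/2)‖Aŷ‖² − uᵀAŷ over the feasible set F_d = {ŷ : ‖ŷ_{M(i)}‖ ≤ λ_i for all i}, and for some group index i the constraint is strictly inactive, ‖ŷ*_{M(i)}‖ < λ_i, then the primal solution x* = u + αAŷ* satisfies x*_{g_i} = 0. -/

import Mathlib

/-- Dual feasibility for the overlapping group ℓ₁ dual: each block `y i` is
supported on the group `g i` and has norm at most `lam i`. -/
def GroupDualFeasible {n G : ℕ} (g : Fin G → Finset (Fin n)) (lam : Fin G → ℝ)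
    (y : Fin G → EuclideanSpace ℝ (Fin n)) : Prop :=
  ∀ i, (∀ j, j ∉ g i → y i j = 0) ∧ ‖y i‖ ≤ lam i

/-- if the `i`-th dual constraint is strictly inactive at a dual
maximizer, then the corresponding primal block `x*_{g_i}` vanishes, where
`x* = u + αAŷ*`. -/
theorem stmt18 {n G : ℕ} (α : ℝ) (hα : 0 < α)
    (g : Fin G → Finset (Fin n)) (lam : Fin G → ℝ) (hlam : ∀ i, 0 < lam i)
    (hcover : ∀ j : Fin n, ∃ i, j ∈ g i)
    (u : EuclideanSpace ℝ (Fin n))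
    (φd : (Fin G → EuclideanSpace ℝ (Fin n)) → ℝ)
    (hφd : ∀ y, φd y = -(α / 2) * ‖∑ i, y i‖ ^ 2 - (inner ℝ u (∑ i, y i) : ℝ))
    (ystar : Fin G → EuclideanSpace ℝ (Fin n))
    (hfeas : GroupDualFeasible g lam ystar)
    (hmax : ∀ y, GroupDualFeasible g lam y → φd y ≤ φd ystar)
    (i : Fin G) (hstrict : ‖ystar i‖ < lam i) :
    ∀ j ∈ g i, (u + α • ∑ i', ystar i') j = 0 := by
  intro j hj
  by_contra hne
  set s : EuclideanSpace ℝ (Fin n) := ∑ i', ystar i' with hs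
  set c : ℝ := (u + α • s) j with hc
  have hc0 : c ≠ 0 := hne
  have hcpos : 0 < c ^ 2 := by positivity
  set δ : ℝ := lam i - ‖ystar i‖ with hδ
  have hδ0 : 0 < δ := by simp [hδ]; linarith
  set ε : ℝ := min (δ / (2 * (|c| + 1))) (1 / α) with hε
  have hε0 : 0 < ε := by
    apply lt_min
    · positivity
    · positivity
  have hεA : ε * |c| < δ := by
    have h1 : ε ≤ δ / (2 * (|c| + 1)) := min_le_left _ _
    have h2 : δ / (2 * (|c| + 1)) * |c| < δ := by
      rw [div_mul_eq_mul_div, div_lt_iff₀ (by positivity)]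
      nlinarith [abs_nonneg c]
    calc ε * |c| ≤ δ / (2 * (|c| + 1)) * |c| :=
          mul_le_mul_of_nonneg_right h1 (abs_nonneg c)
      _ < δ := h2
  have hεB : ε * α < 2 := by
    have h1 : ε ≤ 1 / α := min_le_right _ _
    have : ε * α ≤ 1 := by
      calc ε * α ≤ 1 / α * α := mul_le_mul_of_nonneg_right h1 hα.le
        _ = 1 := by field_simp
    linarith
  set t : ℝ := -(ε * c) with ht
  set e : EuclideanSpace ℝ (Fin n) := EuclideanSpace.single j 1 with he
  have hnorme : ‖e‖ = 1 := by rw [he, EuclideanSpace.norm_single]; simp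
  set y' : Fin G → EuclideanSpace ℝ (Fin n) :=
    Function.update ystar i (ystar i + t • e) with hy'
  have hsum : ∑ i', y' i' = s + t • e := by
    rw [hy', Finset.sum_update_of_mem (Finset.mem_univ i), hs,
      ← Finset.sum_erase_add Finset.univ ystar (Finset.mem_univ i)]
    have : Finset.univ \ {i} = Finset.univ.erase i := by
      ext x; simp [Finset.mem_erase, and_comm]
    rw [this]
    abel
  have habs_t : |t| = ε * |c| := by
    rw [ht, abs_neg, abs_mul, abs_of_pos hε0]
  have hfeas' : GroupDualFeasible g lam y' := by
    intro k
    by_cases hk : k = i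
    · subst hk
      constructor
      · intro j' hj'
        have hjj' : j ≠ j' := fun h => hj' (h ▸ hj)
        have h1 : ystar k j' = 0 := (hfeas k).1 j' hj'
        have h2 : e j' = 0 := by
          rw [he]; simp [EuclideanSpace.single_apply, Ne.symm hjj']
        simp [hy', Function.update_self]
        show ystar k j' + t * e j' = 0
        rw [h1, h2]; ring
      · rw [hy', Function.update_self]
        refine le_of_lt ?_
        calc ‖ystar k + t • e‖ ≤ ‖ystar k‖ + ‖t • e‖ := norm_add_le _ _
          _ = ‖ystar k‖ + |t| := by rw [norm_smul, hnorme, Real.norm_eq_abs, mul_one]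
          _ = ‖ystar k‖ + ε * |c| := by rw [habs_t]
          _ < ‖ystar k‖ + δ := by linarith
          _ = lam k := by rw [hδ]; ring
    · rw [hy', Function.update_of_ne hk]
      exact hfeas k
  have hinner_se : (inner ℝ s e : ℝ) = s j := by
    rw [he, EuclideanSpace.inner_single_right]; simp
  have hinner_ue : (inner ℝ u e : ℝ) = u j := by
    rw [he, EuclideanSpace.inner_single_right]; simp
  have hcval : c = u j + α * s j := by
    rw [hc]
    show u j + (α • s) j = _
    simp [PiLp.smul_apply]
  have hdiff : φd y' - φd ystar = -t * c - (α / 2) * t ^ 2 := by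
    rw [hφd y', hφd ystar, hsum, hs]
    rw [norm_add_sq_real, inner_add_right, inner_smul_right, real_inner_smul_right,
      norm_smul, Real.norm_eq_abs, hnorme, hinner_se, hinner_ue, hcval]
    rw [mul_one, sq_abs]
    ring
  have hval : φd y' - φd ystar = ε * c ^ 2 * (1 - ε * α / 2) := by
    rw [hdiff, ht]; ring
  have hpos : 0 < φd y' - φd ystar := by
    rw [hval]
    apply mul_pos (by positivity)
    linarith
  have := hmax y' hfeas'
  linarith
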